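/- arXiv:2210.11107 — 2 statements merged into one kernel-verified Lean document; each statement's English description precedes it below -/
import Mathlib

section
/- Let S be a p×p real symmetric matrix with strictly positive diagonal entries S_{jj} > 0, and let λ_{jk} ≥ 0 for j ≠ k be penalty parameters satisfying λ_{jk} ≥ |S_{jk}| for all j ≠ k. Then the diagonal matrix Θ* with entries Θ*_{jj} = 1/S_{jj} maximizes the network graphical LASSO objective g(Θ) = log det(Θ) − tr(SΘ) − Σ_{j≠k} λ_{jk}|Θ_{jk}| over all p×p real symmetric positive definite matrices Θ. That is, for every symmetric positive definite Θ, g(Θ) ≤ g(Θ*). In particular, for large enough penalties all off-diagonal parameter estimates are set to zero. -/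
open Matrix

/-- The network graphical LASSO objective
`g(Θ) = log det Θ − tr(SΘ) − Σ_{j≠k} λ_{jk} |Θ_{jk}|`. -/
noncomputable def nglassoObj {p : ℕ} (S : Matrix (Fin p) (Fin p) ℝ)
    (lam : Fin p → Fin p → ℝ) (Θ : Matrix (Fin p) (Fin p) ℝ) : ℝ :=
  Real.log Θ.det - (S * Θ).trace -
    ∑ j : Fin p, ∑ k : Fin p, if j ≠ k then lam j k * |Θ j k| else 0

/-- For a positive definite real matrix, `log det A ≤ tr A − p`. -/
theorem aux_logdet_le {p : ℕ} (A : Matrix (Fin p) (Fin p) ℝ) (hA : A.PosDef) :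
    Real.log A.det ≤ A.trace - p := by
  have hμ := hA.eigenvalues_pos
  have hdet : A.det = ∏ i, hA.1.eigenvalues i := by
    simpa using hA.1.det_eq_prod_eigenvalues
  have htr : A.trace = ∑ i, hA.1.eigenvalues i := by
    simpa using hA.1.trace_eq_sum_eigenvalues
  rw [hdet, htr, Real.log_prod (fun i _ => (hμ i).ne')]
  calc ∑ i, Real.log (hA.1.eigenvalues i) ≤ ∑ i : Fin p, (hA.1.eigenvalues i - 1) :=
        Finset.sum_le_sum fun i _ => Real.log_le_sub_one_of_pos (hμ i)
    _ = (∑ i, hA.1.eigenvalues i) - p := by simp [Finset.sum_sub_distrib]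

/-- Congruence by a positive diagonal matrix preserves positive definiteness. -/
theorem aux_congr_posDef {p : ℕ} (Θ : Matrix (Fin p) (Fin p) ℝ) (hΘ : Θ.PosDef)
    (r : Fin p → ℝ) (hr : ∀ j, 0 < r j) :
    (Matrix.diagonal r * Θ * Matrix.diagonal r).PosDef := by
  refine Matrix.PosDef.of_dotProduct_mulVec_pos ?_ ?_
  · have h1 : (Matrix.diagonal r)ᴴ = Matrix.diagonal r := by
      simp [Matrix.diagonal_conjTranspose]
    unfold Matrix.IsHermitian
    rw [Matrix.conjTranspose_mul, Matrix.conjTranspose_mul, h1, hΘ.1.eq, ← Matrix.mul_assoc]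
  · intro x hx
    have hy : Matrix.diagonal r *ᵥ x ≠ 0 := by
      intro h
      apply hx
      funext i
      have := congrFun h i
      simp [Matrix.mulVec_diagonal] at this
      rcases this with h' | h'
      · exact absurd h' (hr i).ne'
      · exact h'
    have := hΘ.dotProduct_mulVec_pos hy
    convert this using 1
    rw [← Matrix.mulVec_mulVec, ← Matrix.mulVec_mulVec, dotProduct_mulVec (star x)]
    congr 1
    funext i
    simp [Matrix.vecMul_diagonal, Matrix.mulVec_diagonal, mul_comm]

/-- Key bound: `log det Θ ≤ Σ d_j Θ_jj − Σ log d_j − p` for positive `d`. -/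
theorem aux_key {p : ℕ} (Θ : Matrix (Fin p) (Fin p) ℝ) (hΘ : Θ.PosDef)
    (d : Fin p → ℝ) (hd : ∀ j, 0 < d j) :
    Real.log Θ.det ≤ (∑ j, d j * Θ j j) - (∑ j, Real.log (d j)) - p := by
  set r : Fin p → ℝ := fun j => Real.sqrt (d j) with hrdef
  have hr : ∀ j, 0 < r j := fun j => Real.sqrt_pos.mpr (hd j)
  set A := Matrix.diagonal r * Θ * Matrix.diagonal r with hAdef
  have hA : A.PosDef := aux_congr_posDef Θ hΘ r hr
  have hdet : A.det = (∏ j, d j) * Θ.det := by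
    rw [hAdef, Matrix.det_mul, Matrix.det_mul, Matrix.det_diagonal]
    have h2 : (∏ j, r j) * (∏ j, r j) = ∏ j, d j := by
      rw [← Finset.prod_mul_distrib]
      exact Finset.prod_congr rfl fun j _ => Real.mul_self_sqrt (hd j).le
    rw [mul_right_comm, h2]
  have htr : A.trace = ∑ j, d j * Θ j j := by
    rw [hAdef, Matrix.trace_mul_cycle, Matrix.diagonal_mul_diagonal]
    have : (fun j => r j * r j) = d := funext fun j => Real.mul_self_sqrt (hd j).le
    rw [this, Matrix.trace]
    congr 1
    funext j
    simp [Matrix.diag, Matrix.diagonal_mul]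
  have h := aux_logdet_le A hA
  rw [hdet, htr] at h
  rw [Real.log_mul (Finset.prod_pos (fun j _ => hd j)).ne' hΘ.det_pos.ne',
    Real.log_prod (fun j _ => (hd j).ne')] at h
  linarith

/-- If all penalties satisfy `λ_{jk} ≥ |S_{jk}|`, then the diagonal matrix with entries
`1/S_{jj}` maximizes the network graphical LASSO objective over symmetric positive
definite matrices. -/
theorem diagonal_maximizes_nglasso_of_large_penalty {p : ℕ}
    (S : Matrix (Fin p) (Fin p) ℝ) (hS : S.IsSymm) (hSdiag : ∀ j, 0 < S j j)
    (lam : Fin p → Fin p → ℝ) (hlam0 : ∀ j k, j ≠ k → 0 ≤ lam j k)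
    (hlam : ∀ j k, j ≠ k → |S j k| ≤ lam j k) :
    ∀ Θ : Matrix (Fin p) (Fin p) ℝ, Θ.IsSymm → Θ.PosDef →
      nglassoObj S lam Θ ≤ nglassoObj S lam (Matrix.diagonal fun j => 1 / S j j) := by
  intro Θ hΘs hΘ
  -- value of the objective at the diagonal candidate
  have hld : Real.log (Matrix.diagonal fun j => 1 / S j j).det = -∑ j, Real.log (S j j) := by
    rw [Matrix.det_diagonal, Real.log_prod (fun j _ => one_div_ne_zero (hSdiag j).ne')]
    simp [one_div, Real.log_inv]
  have htrD : (S * Matrix.diagonal fun j => 1 / S j j).trace = p := by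
    have h1 : ∀ j, (S * Matrix.diagonal fun i => 1 / S i i) j j = 1 := by
      intro j
      rw [Matrix.mul_diagonal, mul_one_div, div_self (hSdiag j).ne']
    calc (S * Matrix.diagonal fun j => 1 / S j j).trace
        = ∑ j, (S * Matrix.diagonal fun i => 1 / S i i) j j := rfl
      _ = ∑ _j : Fin p, (1:ℝ) := Finset.sum_congr rfl fun j _ => h1 j
      _ = p := by simp
  have hpenD : ∑ j : Fin p, ∑ k : Fin p,
      (if j ≠ k then lam j k * |(Matrix.diagonal fun i => 1 / S i i) j k| else 0) = 0 := by
    apply Finset.sum_eq_zero; intro j _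
    apply Finset.sum_eq_zero; intro k _
    by_cases h : j = k
    · simp [h]
    · simp [h, Matrix.diagonal_apply_ne _ h]
  -- the trace plus penalty dominates the diagonal part of the trace
  have htr : (S * Θ).trace = ∑ j, ∑ k, S j k * Θ k j := by
    simp [Matrix.trace, Matrix.diag, Matrix.mul_apply]
  have hkey : ∑ j, S j j * Θ j j ≤ (S * Θ).trace +
      ∑ j : Fin p, ∑ k : Fin p, (if j ≠ k then lam j k * |Θ j k| else 0) := by
    rw [htr, ← Finset.sum_add_distrib]
    apply Finset.sum_le_sum
    intro j _
    rw [← Finset.sum_add_distrib]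
    have hL : S j j * Θ j j = ∑ k, if k = j then S j k * Θ k j else 0 := by
      rw [Finset.sum_ite_eq']; simp
    rw [hL]
    apply Finset.sum_le_sum
    intro k _
    by_cases h : k = j
    · subst h; simp
    · have hjk : j ≠ k := fun h' => h h'.symm
      simp only [h, if_neg, hjk, if_pos, ite_true, ite_false, ne_eq, not_false_eq_true]
      have hsym : Θ k j = Θ j k := by
        conv_lhs => rw [← hΘs]
        rfl
      have h1 : -(lam j k * |Θ j k|) ≤ S j k * Θ j k := by
        have h2 : |S j k * Θ j k| ≤ lam j k * |Θ j k| := by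
          rw [abs_mul]
          exact mul_le_mul_of_nonneg_right (hlam j k hjk) (abs_nonneg _)
        linarith [neg_abs_le (S j k * Θ j k)]
      rw [hsym]
      linarith
  -- combine with the log-det bound
  have hmain := aux_key Θ hΘ (fun j => S j j) hSdiag
  unfold nglassoObj
  rw [hld, htrD, hpenD]
  linarith
end

section
/- Let R be a p×p real symmetric positive definite matrix with unit diagonal entries R_{jj} = 1 (a correlation matrix), and let λ ≥ max_{j≠k} |R_{jk}| be a constant penalty. Then the p×p identity matrix maximizes the objective g(Θ) = log det(Θ) − tr(RΘ) − λ Σ_{j≠k} |Θ_{jk}| over all p×p real symmetric positive definite matrices Θ. Consequently, when all variables are standardised to unit sample variance, the optimal graphical LASSO intercept hyperparameter β₀ (with penalty λ = exp(β₀)) admitting a non-diagonal solution satisfies exp(β₀) ≤ max_{j≠k} |R_{jk}|. -/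
open Matrix

/-- The graphical LASSO objective with a constant penalty `λ`:
`g(Θ) = log det Θ − tr(RΘ) − λ Σ_{j≠k} |Θ_{jk}|`. -/
noncomputable def glassoObjConst {p : ℕ} (R : Matrix (Fin p) (Fin p) ℝ)
    (lam : ℝ) (Θ : Matrix (Fin p) (Fin p) ℝ) : ℝ :=
  Real.log Θ.det - (R * Θ).trace -
    lam * ∑ j : Fin p, ∑ k : Fin p, if j ≠ k then |Θ j k| else 0

private lemma trace_eq_sum_eigs {p : ℕ} {A : Matrix (Fin p) (Fin p) ℝ} (hA : A.IsHermitian) :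
    A.trace = ∑ i, hA.eigenvalues i := by
  simpa using hA.trace_eq_sum_eigenvalues

private lemma logdet_le {p : ℕ} {Θ : Matrix (Fin p) (Fin p) ℝ} (hΘ : Θ.PosDef) :
    Real.log Θ.det ≤ Θ.trace - p := by
  have hherm := hΘ.isHermitian
  have heig : ∀ i, 0 < hherm.eigenvalues i := hΘ.eigenvalues_pos
  have hdet : Θ.det = ∏ i, hherm.eigenvalues i := by
    simpa using hherm.det_eq_prod_eigenvalues
  rw [hdet, Real.log_prod (fun i _ => (heig i).ne'), trace_eq_sum_eigs hherm]
  have : ∀ i ∈ Finset.univ, Real.log (hherm.eigenvalues i) ≤ hherm.eigenvalues i - 1 :=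
    fun i _ => Real.log_le_sub_one_of_pos (heig i)
  calc ∑ i, Real.log (hherm.eigenvalues i) ≤ ∑ i : Fin p, (hherm.eigenvalues i - 1) :=
        Finset.sum_le_sum this
    _ = (∑ i, hherm.eigenvalues i) - p := by rw [Finset.sum_sub_distrib]; simp

private lemma trace_term {p : ℕ} {R Θ : Matrix (Fin p) (Fin p) ℝ} (hΘ : Θ.IsSymm) (hd : ∀ j, R j j = 1) {lam : ℝ}
    (hle : ∀ j k, j ≠ k → |R j k| ≤ lam) :
    Θ.trace ≤ (R * Θ).trace + lam * ∑ j : Fin p, ∑ k : Fin p, if j ≠ k then |Θ j k| else 0 := by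
  have hsym : ∀ j k, Θ k j = Θ j k := fun j k => (congrFun (congrFun hΘ k) j).symm
  have key : ∀ j k : Fin p, (if k = j then Θ j j else 0) ≤
      R j k * Θ k j + lam * (if j ≠ k then |Θ j k| else 0) := by
    intro j k
    by_cases h : j = k
    · subst h; simp [hd]
    · have h' : ¬ k = j := fun hh => h hh.symm
      simp only [h', if_neg, ne_eq, h, not_false_iff, if_pos]
      have h1 : -(|R j k| * |Θ j k|) ≤ R j k * Θ j k := by
        rw [← abs_mul]; exact neg_abs_le _
      have h2 : |R j k| * |Θ j k| ≤ lam * |Θ j k| :=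
        mul_le_mul_of_nonneg_right (hle j k h) (abs_nonneg _)
      rw [hsym j k]; linarith
  calc Θ.trace = ∑ j : Fin p, ∑ k : Fin p, (if k = j then Θ j j else 0) := by
        simp [Matrix.trace, Matrix.diag]
    _ ≤ ∑ j : Fin p, ∑ k : Fin p,
          (R j k * Θ k j + lam * (if j ≠ k then |Θ j k| else 0)) :=
        Finset.sum_le_sum (fun j _ => Finset.sum_le_sum (fun k _ => key j k))
    _ = (R * Θ).trace + lam * ∑ j : Fin p, ∑ k : Fin p, if j ≠ k then |Θ j k| else 0 := by
        simp [Matrix.trace, Matrix.diag, Matrix.mul_apply, Finset.sum_add_distrib,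
          Finset.mul_sum]

private lemma trace_term_strict {p : ℕ} {R Θ : Matrix (Fin p) (Fin p) ℝ} (hΘ : Θ.IsSymm) (hd : ∀ j, R j j = 1) {lam : ℝ}
    (hlt : ∀ j k, j ≠ k → |R j k| < lam) {j₀ k₀ : Fin p} (hjk : j₀ ≠ k₀) (hne : Θ j₀ k₀ ≠ 0) :
    Θ.trace < (R * Θ).trace + lam * ∑ j : Fin p, ∑ k : Fin p, if j ≠ k then |Θ j k| else 0 := by
  have hsym : ∀ j k, Θ k j = Θ j k := fun j k => (congrFun (congrFun hΘ k) j).symm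
  have key : ∀ j k : Fin p, (if k = j then Θ j j else 0) ≤
      R j k * Θ k j + lam * (if j ≠ k then |Θ j k| else 0) := by
    intro j k
    by_cases h : j = k
    · subst h; simp [hd]
    · have h' : ¬ k = j := fun hh => h hh.symm
      simp only [h', if_neg, ne_eq, h, not_false_iff, if_pos]
      have h1 : -(|R j k| * |Θ j k|) ≤ R j k * Θ j k := by
        rw [← abs_mul]; exact neg_abs_le _
      have h2 : |R j k| * |Θ j k| ≤ lam * |Θ j k| :=
        mul_le_mul_of_nonneg_right (hlt j k h).le (abs_nonneg _)
      rw [hsym j k]; linarith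
  have keystrict : (if k₀ = j₀ then Θ j₀ j₀ else 0) <
      R j₀ k₀ * Θ k₀ j₀ + lam * (if j₀ ≠ k₀ then |Θ j₀ k₀| else 0) := by
    have h' : ¬ k₀ = j₀ := fun hh => hjk hh.symm
    simp only [h', if_neg, ne_eq, hjk, not_false_iff, if_pos]
    have h1 : -(|R j₀ k₀| * |Θ j₀ k₀|) ≤ R j₀ k₀ * Θ j₀ k₀ := by
      rw [← abs_mul]; exact neg_abs_le _
    have h2 : |R j₀ k₀| * |Θ j₀ k₀| < lam * |Θ j₀ k₀| :=
      mul_lt_mul_of_pos_right (hlt j₀ k₀ hjk) (abs_pos.mpr hne)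
    rw [hsym j₀ k₀]; linarith
  have inner : ∀ j : Fin p, (∑ k : Fin p, (if k = j then Θ j j else 0)) ≤
      ∑ k : Fin p, (R j k * Θ k j + lam * (if j ≠ k then |Θ j k| else 0)) :=
    fun j => Finset.sum_le_sum (fun k _ => key j k)
  have innerstrict : (∑ k : Fin p, (if k = j₀ then Θ j₀ j₀ else 0)) <
      ∑ k : Fin p, (R j₀ k * Θ k j₀ + lam * (if j₀ ≠ k then |Θ j₀ k| else 0)) :=
    Finset.sum_lt_sum (fun k _ => key j₀ k) ⟨k₀, Finset.mem_univ _, keystrict⟩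
  calc Θ.trace = ∑ j : Fin p, ∑ k : Fin p, (if k = j then Θ j j else 0) := by
        simp [Matrix.trace, Matrix.diag]
    _ < ∑ j : Fin p, ∑ k : Fin p,
          (R j k * Θ k j + lam * (if j ≠ k then |Θ j k| else 0)) :=
        Finset.sum_lt_sum (fun j _ => inner j) ⟨j₀, Finset.mem_univ _, innerstrict⟩
    _ = (R * Θ).trace + lam * ∑ j : Fin p, ∑ k : Fin p, if j ≠ k then |Θ j k| else 0 := by
        simp [Matrix.trace, Matrix.diag, Matrix.mul_apply, Finset.sum_add_distrib,
          Finset.mul_sum]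

private lemma obj_one {p : ℕ} {R : Matrix (Fin p) (Fin p) ℝ} (hRdiag : ∀ j, R j j = 1)
    (lam : ℝ) : glassoObjConst R lam (1 : Matrix (Fin p) (Fin p) ℝ) = -(p : ℝ) := by
  unfold glassoObjConst
  have h1 : ∑ j : Fin p, ∑ k : Fin p,
      (if j ≠ k then |(1 : Matrix (Fin p) (Fin p) ℝ) j k| else 0) = 0 := by
    apply Finset.sum_eq_zero; intro j _
    apply Finset.sum_eq_zero; intro k _
    by_cases h : j = k <;> simp [h, Matrix.one_apply]
  have h2 : (R * (1 : Matrix (Fin p) (Fin p) ℝ)).trace = (p : ℝ) := by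
    rw [mul_one]
    simp [Matrix.trace, Matrix.diag, hRdiag]
  rw [h1, h2]; simp

/-- For a correlation matrix `R` (symmetric positive definite with unit diagonal) and a
constant penalty `λ ≥ max_{j≠k} |R_{jk}|`, the identity matrix maximizes the graphical
LASSO objective over symmetric positive definite matrices. Consequently, any intercept
hyperparameter `β₀` whose penalty `exp β₀` admits a non-diagonal maximizer satisfies
`exp β₀ ≤ |R_{jk}|` for some `j ≠ k`, i.e. `exp β₀ ≤ max_{j≠k} |R_{jk}|`. -/
theorem identity_maximizes_glasso_of_large_penalty {p : ℕ}
    (R : Matrix (Fin p) (Fin p) ℝ) (hR : R.IsSymm) (hRpd : R.PosDef)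
    (hRdiag : ∀ j, R j j = 1) :
    (∀ lam : ℝ, (∀ j k, j ≠ k → |R j k| ≤ lam) →
      ∀ Θ : Matrix (Fin p) (Fin p) ℝ, Θ.IsSymm → Θ.PosDef →
        glassoObjConst R lam Θ ≤ glassoObjConst R lam (1 : Matrix (Fin p) (Fin p) ℝ)) ∧
    (∀ β₀ : ℝ,
      (∃ Θ : Matrix (Fin p) (Fin p) ℝ, Θ.IsSymm ∧ Θ.PosDef ∧
        (∃ j k, j ≠ k ∧ Θ j k ≠ 0) ∧
        (∀ Θ' : Matrix (Fin p) (Fin p) ℝ, Θ'.IsSymm → Θ'.PosDef →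
          glassoObjConst R (Real.exp β₀) Θ' ≤ glassoObjConst R (Real.exp β₀) Θ)) →
      ∃ j k, j ≠ k ∧ Real.exp β₀ ≤ |R j k|) := by
  constructor
  · intro lam hle Θ hsym hpd
    rw [obj_one hRdiag]
    have h1 := trace_term (R := R) hsym hRdiag hle
    have h2 := logdet_le hpd
    unfold glassoObjConst
    linarith
  · intro β₀ ⟨Θ, hsym, hpd, ⟨j₀, k₀, hjk, hne⟩, hmax⟩
    by_contra hcon
    push_neg at hcon
    have hlt : ∀ j k, j ≠ k → |R j k| < Real.exp β₀ := fun j k h => hcon j k h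
    have h1 := trace_term_strict (R := R) hsym hRdiag hlt hjk hne
    have h2 := logdet_le hpd
    have h3 : glassoObjConst R (Real.exp β₀) Θ < -(p : ℝ) := by
      unfold glassoObjConst; linarith
    have h4 := hmax 1 (Matrix.isSymm_one) (Matrix.PosDef.one)
    rw [obj_one hRdiag] at h4
    linarith
end
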